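/- Let μ_data be a probability measure on ℝ^d, g : [0,∞) → ℝ positive bounded measurable, α ∈ ℝ, 0 < ε < T < ∞, σ_t := (∫_0^t g(η)² dη)^{1/2}, and p_r(x) := ∫ (2πr²)^{−d/2} exp(−|x−x̃|²/(2r²)) dμ_data(x̃). Then the time-integral ∫_ε^T σ_t^{−2α} g(t)² p_{σ_t}(x) dt equals (2π)^{−d/2} ∫_{ℝ^d} Φ_{σ_ε}^{σ_T}((d+2α−2)/2, |x−x̃|²/2) dμ_data(x̃) for every x ∈ ℝ^d. -/

import Mathlib

open MeasureTheory Real Filter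
open scoped NNReal ENNReal

/-- `Φ a b s z = ∫_{1/b²}^{1/a²} u^(s-1) e^{-z u} du`. -/
noncomputable def Phi (a b s z : ℝ) : ℝ :=
  ∫ u in (1 / b ^ 2)..(1 / a ^ 2), u ^ (s - 1) * Real.exp (-z * u)

/-- `σ_t := (∫_0^t g²)^{1/2}`. -/
noncomputable def sigma (g : ℝ → ℝ) (t : ℝ) : ℝ :=
  Real.sqrt (∫ η in (0 : ℝ)..t, g η ^ 2)

/-- Gaussian mixture density `p_r(x)`. -/
noncomputable def pdens (d : ℕ) (μ : Measure (EuclideanSpace ℝ (Fin d)))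
    (r : ℝ) (x : EuclideanSpace ℝ (Fin d)) : ℝ :=
  ∫ xt, (2 * Real.pi * r ^ 2) ^ (-(d : ℝ) / 2) *
    Real.exp (-‖x - xt‖ ^ 2 / (2 * r ^ 2)) ∂μ

/-- Time-integral identity:
`∫_ε^T σ_t^{-2α} g(t)² p_{σ_t}(x) dt = (2π)^{-d/2} ∫ Φ_{σ_ε}^{σ_T}((d+2α-2)/2, |x-x̃|²/2) dμ(x̃)`. -/
theorem time_integral_identity (d : ℕ) (μ : Measure (EuclideanSpace ℝ (Fin d)))
    [IsProbabilityMeasure μ] (g : ℝ → ℝ) (hg : Measurable g) (hgpos : ∀ t, 0 < g t)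
    (hgbdd : ∃ M : ℝ, ∀ t, g t ≤ M) (α ε T : ℝ) (hε : 0 < ε) (hεT : ε < T)
    (x : EuclideanSpace ℝ (Fin d)) :
    (∫ t in ε..T, (sigma g t) ^ (-(2 : ℝ) * α) * g t ^ 2 * pdens d μ (sigma g t) x)
      = (2 * Real.pi) ^ (-(d : ℝ) / 2) *
        ∫ xt, Phi (sigma g ε) (sigma g T) (((d : ℝ) + 2 * α - 2) / 2) (‖x - xt‖ ^ 2 / 2) ∂μ := by
  classical
  obtain ⟨M, hM⟩ := hgbdd
  set F : ℝ → ℝ := fun t => ∫ η in (0 : ℝ)..t, g η ^ 2 with hFdef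
  have hg2meas : Measurable fun t => g t ^ 2 := hg.pow_const 2
  have hg2int : ∀ a b : ℝ, IntervalIntegrable (fun t => g t ^ 2) volume a b := by
    intro a b
    rw [intervalIntegrable_iff]
    haveI : IsFiniteMeasure (volume.restrict (Set.uIoc a b)) :=
      ⟨by rw [Measure.restrict_apply_univ]; exact measure_Ioc_lt_top⟩
    refine Integrable.mono' (integrable_const (M ^ 2)) hg2meas.aestronglyMeasurable
      (Eventually.of_forall fun t => ?_)
    rw [Real.norm_eq_abs, abs_of_nonneg (sq_nonneg _)]
    exact pow_le_pow_left₀ (hgpos t).le (hM t) 2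
  have hsigma : ∀ t, sigma g t = Real.sqrt (F t) := fun t => by rw [hFdef]; rfl
  have hFsub : ∀ a b : ℝ, F b - F a = ∫ t in a..b, g t ^ 2 := by
    intro a b
    rw [hFdef]
    exact intervalIntegral.integral_interval_sub_left (hg2int 0 b) (hg2int 0 a)
  have hFmono : StrictMono F := by
    intro a b hab
    have h1 := hFsub a b
    have h2 : 0 < ∫ t in a..b, g t ^ 2 :=
      intervalIntegral.intervalIntegral_pos_of_pos_on (hg2int a b)
        (fun t _ => pow_pos (hgpos t) 2) hab
    linarith
  have hF0 : F 0 = 0 := by rw [hFdef]; exact intervalIntegral.integral_same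
  have hFpos : ∀ t, 0 < t → 0 < F t := fun t ht => hF0 ▸ hFmono ht
  have hFcont : Continuous F := by
    rw [hFdef]; exact intervalIntegral.continuous_primitive hg2int 0
  have hsig2 : ∀ t, 0 < t → sigma g t ^ 2 = F t := fun t ht => by
    rw [hsigma t]; exact Real.sq_sqrt (hFpos t ht).le
  set A : ℝ := F ε with hAdef
  set B : ℝ := F T with hBdef
  have hA : 0 < A := hFpos ε hε
  have hAB : A < B := hFmono hεT
  have hB : 0 < B := lt_trans hA hAB
  -- the pushforward measure identity
  set ν : Measure ℝ :=
    (volume.restrict (Set.Ioc ε T)).withDensity (fun t => ENNReal.ofReal (g t ^ 2)) with hνdef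
  have hIocLint : ∀ a b : ℝ, a ≤ b →
      (∫⁻ t in Set.Ioc a b, ENNReal.ofReal (g t ^ 2)) = ENNReal.ofReal (F b - F a) := by
    intro a b hab
    have h1 : ENNReal.ofReal (∫ t in Set.Ioc a b, g t ^ 2) =
        ∫⁻ t in Set.Ioc a b, ENNReal.ofReal (g t ^ 2) :=
      ofReal_integral_eq_lintegral_ofReal ((hg2int a b).1)
        (Eventually.of_forall fun t => sq_nonneg _)
    rw [← h1, hFsub, intervalIntegral.integral_of_le hab]
  haveI hνfin : IsFiniteMeasure ν := by
    constructor
    rw [hνdef, withDensity_apply _ MeasurableSet.univ, Measure.restrict_univ]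
    rw [show (∫⁻ t, ENNReal.ofReal (g t ^ 2) ∂(volume.restrict (Set.Ioc ε T))) =
        ∫⁻ t in Set.Ioc ε T, ENNReal.ofReal (g t ^ 2) from rfl, hIocLint ε T hεT.le]
    exact ENNReal.ofReal_lt_top
  have hmap : ν.map F = volume.restrict (Set.Ioc A B) := by
    haveI : IsFiniteMeasure (ν.map F) := by
      constructor
      rw [Measure.map_apply hFcont.measurable MeasurableSet.univ, Set.preimage_univ]
      exact measure_lt_top ν _
    refine Measure.ext_of_Iic (ν.map F) _ (fun c => ?_)
    rw [Measure.map_apply hFcont.measurable measurableSet_Iic]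
    have hpre : MeasurableSet (F ⁻¹' Set.Iic c) := hFcont.measurable measurableSet_Iic
    rw [hνdef, withDensity_apply _ hpre, Measure.restrict_restrict hpre,
      Measure.restrict_apply measurableSet_Iic]
    rcases lt_or_ge c A with hc | hc
    · have h1 : F ⁻¹' Set.Iic c ∩ Set.Ioc ε T = ∅ := by
        apply Set.eq_empty_iff_forall_notMem.mpr
        rintro t ⟨ht1, ht2⟩
        have hb1 : F t ≤ c := Set.mem_Iic.1 (Set.mem_preimage.1 ht1)
        have hb2 : A < F t := hFmono ht2.1
        linarith
      have h2 : Set.Iic c ∩ Set.Ioc A B = ∅ := by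
        apply Set.eq_empty_iff_forall_notMem.mpr
        rintro y ⟨hy1, hy2⟩
        have hb1 : y ≤ c := Set.mem_Iic.1 hy1
        have hb2 : A < y := hy2.1
        linarith
      rw [h1, h2]
      simp
    · rcases le_or_gt c B with hc2 | hc2
      · obtain ⟨τ, hτm, hτ⟩ := intermediate_value_Icc hεT.le hFcont.continuousOn
          (Set.mem_Icc.2 ⟨hc, hc2⟩)
        have h1 : F ⁻¹' Set.Iic c ∩ Set.Ioc ε T = Set.Ioc ε τ := by
          ext t
          simp only [Set.mem_inter_iff, Set.mem_preimage, Set.mem_Iic, Set.mem_Ioc]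
          constructor
          · rintro ⟨h1, h2, h3⟩
            refine ⟨h2, ?_⟩
            have : F t ≤ F τ := by rw [hτ]; exact h1
            exact hFmono.le_iff_le.mp this
          · rintro ⟨h2, h3⟩
            refine ⟨?_, h2, h3.trans hτm.2⟩
            rw [← hτ]
            exact hFmono.monotone h3
        have h2 : Set.Iic c ∩ Set.Ioc A B = Set.Ioc A c := by
          ext y
          simp only [Set.mem_inter_iff, Set.mem_Iic, Set.mem_Ioc]
          constructor
          · rintro ⟨h1, h2, h3⟩; exact ⟨h2, h1⟩
          · rintro ⟨h1, h2⟩; exact ⟨h2, h1, h2.trans hc2⟩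
        rw [h1, h2, hIocLint ε τ hτm.1, Real.volume_Ioc, hτ]
      · have h1 : F ⁻¹' Set.Iic c ∩ Set.Ioc ε T = Set.Ioc ε T := by
          apply Set.inter_eq_right.mpr
          intro t ht
          have : F t ≤ B := hFmono.monotone ht.2
          exact le_trans this hc2.le
        have h2 : Set.Iic c ∩ Set.Ioc A B = Set.Ioc A B := by
          apply Set.inter_eq_right.mpr
          intro y hy
          exact le_trans hy.2 hc2.le
        rw [h1, h2, hIocLint ε T hεT.le, Real.volume_Ioc]
  set s0 : ℝ := ((d : ℝ) + 2 * α - 2) / 2 with hs0def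
  -- the key one-dimensional substitution identity
  have key : ∀ w : ℝ, 0 ≤ w →
      (∫ t in Set.Ioc ε T, F t ^ (-α) * g t ^ 2 *
          ((2 * π * F t) ^ (-(d : ℝ) / 2) * Real.exp (-w / (2 * F t))))
        = (2 * π) ^ (-(d : ℝ) / 2) *
            ∫ u in (1 / B)..(1 / A), u ^ (s0 - 1) * Real.exp (-(w / 2) * u) := by
    intro w hw
    set h : ℝ → ℝ := fun u => u ^ (s0 - 1) * Real.exp (-(w / 2) * u) with hhdef
    set ψ : ℝ → ℝ := fun v => (2 * π) ^ (-(d : ℝ) / 2) * ((v ^ 2)⁻¹ * h v⁻¹) with hψdef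
    have hψmeas : Measurable ψ := by
      rw [hψdef, hhdef]
      apply Measurable.const_mul
      apply Measurable.mul
      · exact (measurable_id.pow_const 2).inv
      · exact (measurable_inv.pow measurable_const).mul
          (Real.measurable_exp.comp (measurable_const.mul measurable_inv))
    have stepA : (∫ t in Set.Ioc ε T, F t ^ (-α) * g t ^ 2 *
        ((2 * π * F t) ^ (-(d : ℝ) / 2) * Real.exp (-w / (2 * F t))))
        = ∫ t in Set.Ioc ε T, ψ (F t) * g t ^ 2 := by
      refine setIntegral_congr_fun measurableSet_Ioc fun t ht => ?_
      have hft : 0 < F t := hFpos t (hε.trans ht.1)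
      simp only [hψdef, hhdef]
      have e1 : (2 * π * F t) ^ (-(d : ℝ) / 2)
          = (2 * π) ^ (-(d : ℝ) / 2) * F t ^ (-(d : ℝ) / 2) :=
        Real.mul_rpow (by positivity) hft.le
      have e2 : ((F t)⁻¹) ^ (s0 - 1) = F t ^ (-(s0 - 1)) := by
        rw [Real.inv_rpow hft.le, ← Real.rpow_neg hft.le]
      have e3 : ((F t) ^ 2)⁻¹ = F t ^ (-2 : ℝ) := by
        rw [← Real.rpow_natCast (F t) 2, ← Real.rpow_neg hft.le]
        norm_num
      have e4 : F t ^ (-α) * F t ^ (-(d : ℝ) / 2) = F t ^ (-2 : ℝ) * F t ^ (-(s0 - 1)) := by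
        rw [← Real.rpow_add hft, ← Real.rpow_add hft]
        congr 1
        rw [hs0def]; ring
      have e5 : -w / (2 * F t) = -(w / 2) * (F t)⁻¹ := by
        field_simp
      rw [e5, e1, e2, e3]
      linear_combination (g t ^ 2 * (2 * π) ^ (-(d : ℝ) / 2) *
        Real.exp (-(w / 2) * (F t)⁻¹)) * e4
    have stepB : (∫ t in Set.Ioc ε T, ψ (F t) * g t ^ 2) = ∫ v in Set.Ioc A B, ψ v := by
      have hg2nn : Measurable fun t => (g t ^ 2).toNNReal :=
        measurable_real_toNNReal.comp hg2meas
      have h1 : (∫ t in Set.Ioc ε T, ψ (F t) * g t ^ 2)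
          = ∫ t, ((g t ^ 2).toNNReal : ℝ≥0) • ψ (F t) ∂(volume.restrict (Set.Ioc ε T)) := by
        refine integral_congr_ae (Eventually.of_forall fun t => ?_)
        show ψ (F t) * g t ^ 2 = (g t ^ 2).toNNReal • ψ (F t)
        rw [NNReal.smul_def, Real.coe_toNNReal _ (sq_nonneg _), smul_eq_mul, mul_comm]
      have h2 : (∫ t, ((g t ^ 2).toNNReal : ℝ≥0) • ψ (F t) ∂(volume.restrict (Set.Ioc ε T)))
          = ∫ t, ψ (F t) ∂ν := by
        rw [hνdef]
        rw [show (fun t => ENNReal.ofReal (g t ^ 2))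
            = fun t => (((g t ^ 2).toNNReal : ℝ≥0) : ℝ≥0∞) from rfl]
        exact (integral_withDensity_eq_integral_smul hg2nn _).symm
      have h3 : (∫ t, ψ (F t) ∂ν) = ∫ v, ψ v ∂(ν.map F) :=
        (integral_map hFcont.measurable.aemeasurable hψmeas.aestronglyMeasurable).symm
      rw [h1, h2, h3, hmap]
    have stepC : (∫ v in Set.Ioc A B, ψ v)
        = (2 * π) ^ (-(d : ℝ) / 2) * ∫ u in (1 / B)..(1 / A), h u := by
      have hIoiCont : ContinuousOn h (Set.Ioi (0 : ℝ)) := by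
        rw [hhdef]
        intro u hu
        apply ContinuousAt.continuousWithinAt
        exact (Real.continuousAt_rpow_const u _ (Or.inl (ne_of_gt hu))).mul
          ((Real.continuous_exp.comp (continuous_const.mul continuous_id)).continuousAt)
      have c1 : ∀ v ∈ Set.uIcc A B, HasDerivAt (fun y : ℝ => y⁻¹) (-((v : ℝ) ^ 2)⁻¹) v := by
        intro v hv
        rw [Set.uIcc_of_le hAB.le] at hv
        exact hasDerivAt_inv (hA.trans_le hv.1).ne'
      have c2 : ContinuousOn (fun v : ℝ => -((v : ℝ) ^ 2)⁻¹) (Set.uIcc A B) := by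
        apply ContinuousOn.neg
        apply ContinuousOn.inv₀ (continuous_pow 2).continuousOn
        intro v hv
        rw [Set.uIcc_of_le hAB.le] at hv
        exact (pow_pos (hA.trans_le hv.1) 2).ne'
      have c3 : ContinuousOn h ((fun v : ℝ => v⁻¹) '' Set.uIcc A B) := by
        refine hIoiCont.mono ?_
        rintro _ ⟨v, hv, rfl⟩
        rw [Set.uIcc_of_le hAB.le] at hv
        exact inv_pos.2 (hA.trans_le hv.1)
      have hsub := intervalIntegral.integral_comp_smul_deriv' c1 c2 c3
      simp only [smul_eq_mul, Function.comp] at hsub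
      have h6 : (∫ v in A..B, (v ^ 2)⁻¹ * h v⁻¹) = ∫ u in (1 / B)..(1 / A), h u := by
        have h7 : (∫ v in A..B, -((v : ℝ) ^ 2)⁻¹ * h v⁻¹)
            = -∫ v in A..B, ((v : ℝ) ^ 2)⁻¹ * h v⁻¹ := by
          rw [← intervalIntegral.integral_neg]
          congr 1
          funext v
          ring
        rw [one_div, one_div, intervalIntegral.integral_symm (A⁻¹) (B⁻¹), ← hsub, h7, neg_neg]
      calc (∫ v in Set.Ioc A B, ψ v) = ∫ v in A..B, ψ v :=
            (intervalIntegral.integral_of_le hAB.le).symm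
        _ = ∫ v in A..B, (2 * π) ^ (-(d : ℝ) / 2) * ((v ^ 2)⁻¹ * h v⁻¹) := by
            simp only [hψdef]
        _ = (2 * π) ^ (-(d : ℝ) / 2) * ∫ v in A..B, (v ^ 2)⁻¹ * h v⁻¹ := by
            rw [intervalIntegral.integral_const_mul]
        _ = (2 * π) ^ (-(d : ℝ) / 2) * ∫ u in (1 / B)..(1 / A), h u := by rw [h6]
    rw [stepA, stepB, stepC]
  -- the double integrand
  set Q : ℝ → EuclideanSpace ℝ (Fin d) → ℝ := fun t xt => F t ^ (-α) * g t ^ 2 *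
    ((2 * π * F t) ^ (-(d : ℝ) / 2) * Real.exp (-‖x - xt‖ ^ 2 / (2 * F t))) with hQdef
  have hQmeas : Measurable (Function.uncurry Q) := by
    rw [hQdef]
    have m1 : Measurable fun p : ℝ × EuclideanSpace ℝ (Fin d) => F p.1 := hFcont.measurable.comp measurable_fst
    have m2 : Measurable fun p : ℝ × EuclideanSpace ℝ (Fin d) => F p.1 ^ (-α) := m1.pow measurable_const
    have m3 : Measurable fun p : ℝ × EuclideanSpace ℝ (Fin d) => g p.1 ^ 2 := (hg.comp measurable_fst).pow_const 2
    have m4 : Measurable fun p : ℝ × EuclideanSpace ℝ (Fin d) => (2 * π * F p.1) ^ (-(d : ℝ) / 2) :=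
      (measurable_const.mul m1).pow measurable_const
    have m5 : Measurable fun p : ℝ × EuclideanSpace ℝ (Fin d) => Real.exp (-‖x - p.2‖ ^ 2 / (2 * F p.1)) := by
      apply Real.measurable_exp.comp
      exact (((continuous_const.sub continuous_snd).norm.pow 2).neg.measurable).div
        (measurable_const.mul m1)
    exact (m2.mul m3).mul (m4.mul m5)
  haveI : IsFiniteMeasure (volume.restrict (Set.Ioc ε T)) :=
    ⟨by rw [Measure.restrict_apply_univ]; exact measure_Ioc_lt_top⟩
  have hQI : Integrable (Function.uncurry Q) ((volume.restrict (Set.Ioc ε T)).prod μ) := by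
    set C : ℝ := max (A ^ (-α)) (B ^ (-α)) * M ^ 2 * (2 * π * A) ^ (-(d : ℝ) / 2) with hCdef
    refine Integrable.mono' (integrable_const C) hQmeas.aestronglyMeasurable ?_
    have hset : ∀ᵐ p : ℝ × EuclideanSpace ℝ (Fin d) ∂((volume.restrict (Set.Ioc ε T)).prod μ), p.1 ∈ Set.Ioc ε T := by
      have hpr := Measure.prod_restrict (μ := (volume : Measure ℝ)) (ν := μ)
        (s := Set.Ioc ε T) (t := Set.univ)
      rw [Measure.restrict_univ] at hpr
      rw [hpr]
      filter_upwards [ae_restrict_mem (measurableSet_Ioc.prod MeasurableSet.univ)] with p hp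
      exact hp.1
    filter_upwards [hset] with p hp
    have hft : 0 < F p.1 := hFpos p.1 (hε.trans hp.1)
    have hfA : A < F p.1 := hFmono hp.1
    have hfB : F p.1 ≤ B := hFmono.monotone hp.2
    have hexp : -(d : ℝ) / 2 ≤ 0 := by
      have : (0 : ℝ) ≤ (d : ℝ) := Nat.cast_nonneg d
      linarith
    have q1 : (0 : ℝ) ≤ F p.1 ^ (-α) := Real.rpow_nonneg hft.le _
    have q4 : (0 : ℝ) ≤ (2 * π * F p.1) ^ (-(d : ℝ) / 2) :=
      Real.rpow_nonneg (by positivity) _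
    have hQnn : 0 ≤ Function.uncurry Q p := by
      apply mul_nonneg (mul_nonneg q1 (sq_nonneg _))
      exact mul_nonneg q4 (Real.exp_nonneg _)
    have b1 : F p.1 ^ (-α) ≤ max (A ^ (-α)) (B ^ (-α)) := by
      rcases le_total α 0 with hα | hα
      · exact le_max_of_le_right (Real.rpow_le_rpow hft.le hfB (by linarith))
      · exact le_max_of_le_left (Real.rpow_le_rpow_of_nonpos hA hfA.le (by linarith))
    have b2 : g p.1 ^ 2 ≤ M ^ 2 := pow_le_pow_left₀ (hgpos _).le (hM _) 2
    have b3 : (2 * π * F p.1) ^ (-(d : ℝ) / 2) ≤ (2 * π * A) ^ (-(d : ℝ) / 2) := by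
      apply Real.rpow_le_rpow_of_nonpos (by positivity) _ hexp
      have hπ : (0 : ℝ) < 2 * π := by positivity
      nlinarith
    have b4 : Real.exp (-‖x - p.2‖ ^ 2 / (2 * F p.1)) ≤ 1 := by
      apply Real.exp_le_one_iff.2
      apply div_nonpos_of_nonpos_of_nonneg
      · simp [sq_nonneg]
      · positivity
    have hmax : (0 : ℝ) ≤ max (A ^ (-α)) (B ^ (-α)) := le_trans q1 b1
    rw [Real.norm_eq_abs, abs_of_nonneg hQnn]
    calc Function.uncurry Q p
        = F p.1 ^ (-α) * g p.1 ^ 2 *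
          ((2 * π * F p.1) ^ (-(d : ℝ) / 2) * Real.exp (-‖x - p.2‖ ^ 2 / (2 * F p.1))) := rfl
      _ ≤ max (A ^ (-α)) (B ^ (-α)) * M ^ 2 * ((2 * π * A) ^ (-(d : ℝ) / 2) * 1) := by
          apply mul_le_mul
          · exact mul_le_mul b1 b2 (sq_nonneg _) hmax
          · exact mul_le_mul b3 b4 (Real.exp_nonneg _) (Real.rpow_nonneg (by positivity) _)
          · exact mul_nonneg q4 (Real.exp_nonneg _)
          · exact mul_nonneg hmax (sq_nonneg _)
      _ = C := by rw [mul_one]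
  have hμint : ∀ t ∈ Set.Ioc ε T,
      sigma g t ^ (-(2 : ℝ) * α) * g t ^ 2 * pdens d μ (sigma g t) x
        = ∫ xt, Q t xt ∂μ := by
    intro t ht
    have ht0 : 0 < t := hε.trans ht.1
    have hft : 0 < F t := hFpos t ht0
    have e1 : sigma g t ^ (-(2 : ℝ) * α) = F t ^ (-α) := by
      rw [hsigma t, Real.sqrt_eq_rpow, ← Real.rpow_mul hft.le]
      congr 1
      ring
    simp only [pdens, hsig2 t ht0, e1, hQdef]
    rw [← MeasureTheory.integral_const_mul]
  rw [intervalIntegral.integral_of_le hεT.le]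
  calc (∫ t in Set.Ioc ε T, sigma g t ^ (-(2 : ℝ) * α) * g t ^ 2 * pdens d μ (sigma g t) x)
      = ∫ t in Set.Ioc ε T, ∫ xt, Q t xt ∂μ :=
        setIntegral_congr_fun measurableSet_Ioc fun t ht => hμint t ht
    _ = ∫ xt, (∫ t in Set.Ioc ε T, Q t xt) ∂μ := integral_integral_swap hQI
    _ = ∫ xt, (2 * π) ^ (-(d : ℝ) / 2) *
          Phi (sigma g ε) (sigma g T) s0 (‖x - xt‖ ^ 2 / 2) ∂μ := by
        refine integral_congr_ae (Eventually.of_forall fun xt => ?_)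
        have hkey := key (‖x - xt‖ ^ 2) (sq_nonneg _)
        simp only [hQdef]
        rw [hkey]
        congr 1
        simp only [Phi, hsig2 ε hε, hsig2 T (hε.trans hεT), hAdef, hBdef]
    _ = (2 * π) ^ (-(d : ℝ) / 2) *
          ∫ xt, Phi (sigma g ε) (sigma g T) s0 (‖x - xt‖ ^ 2 / 2) ∂μ := by
        rw [MeasureTheory.integral_const_mul]
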